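/- The affine curve in the (x,c)-plane defined by f_c³(x) = 0, i.e., ((x²+c)²+c)²+c = 0, is birational over ℚ to the elliptic curve v² = u³ - u + 1 via the map sending (u,v) with u ≠ ±1 to x = v/(u²-1), c = -1/(u²-1)². -/

import Mathlib

lemma key_aux (x c A B : ℚ) (hA : A = x ^ 2 + c) (hBd : B = A ^ 2 + c)
    (h0 : B ^ 2 + c = 0) (hc : c ≠ 0) :
    (x / B) ^ 2 = (A / B) ^ 3 - A / B + 1 ∧ (A / B) ^ 2 - 1 ≠ 0 ∧
      (x / B) / ((A / B) ^ 2 - 1) = x ∧ -1 / ((A / B) ^ 2 - 1) ^ 2 = c := by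
  have hBne : B ≠ 0 := by
    intro h
    apply hc
    rw [h] at h0; simpa using h0
  have hu2 : (A / B) ^ 2 - 1 = 1 / B := by
    field_simp
    linear_combination -hBd - h0
  have hx2 : x ^ 2 = A + B ^ 2 := by linear_combination -hA - h0
  refine ⟨?_, ?_, ?_, ?_⟩
  · have h3 : (A / B) ^ 3 - A / B + 1 = A / B * ((A / B) ^ 2 - 1) + 1 := by ring
    rw [h3, hu2]
    field_simp
    linear_combination hx2
  · rw [hu2]; exact one_div_ne_zero hBne
  · rw [hu2]; field_simp
  · rw [hu2]
    field_simp
    linarith [h0]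

/-- The affine curve `f_c³(x) = 0` is birational over `ℚ` to the elliptic curve
`v² = u³ - u + 1`: the maps `(u,v) ↦ (x,c) = (v/(u²-1), -1/(u²-1)²)` and
`(x,c) ↦ (u,v) = (f_c(x)/f_c²(x), x/f_c²(x))` are mutually inverse rational maps. -/
theorem stmt_5 :
    (∀ u v : ℚ, v ^ 2 = u ^ 3 - u + 1 → u ≠ 1 → u ≠ -1 →
      let x : ℚ := v / (u ^ 2 - 1)
      let c : ℚ := -1 / (u ^ 2 - 1) ^ 2
      ((x ^ 2 + c) ^ 2 + c) ^ 2 + c = 0 ∧ (x ^ 2 + c) ^ 2 + c ≠ 0 ∧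
        (x ^ 2 + c) / ((x ^ 2 + c) ^ 2 + c) = u ∧ x / ((x ^ 2 + c) ^ 2 + c) = v) ∧
    (∀ x c : ℚ, ((x ^ 2 + c) ^ 2 + c) ^ 2 + c = 0 → c ≠ 0 →
      let u : ℚ := (x ^ 2 + c) / ((x ^ 2 + c) ^ 2 + c)
      let v : ℚ := x / ((x ^ 2 + c) ^ 2 + c)
      v ^ 2 = u ^ 3 - u + 1 ∧ u ^ 2 - 1 ≠ 0 ∧
        v / (u ^ 2 - 1) = x ∧ -1 / (u ^ 2 - 1) ^ 2 = c) := by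
  constructor
  · intro u v hE hu1 hu2 x c
    have hd : u ^ 2 - 1 ≠ 0 := by
      intro h
      rcases mul_eq_zero.mp (show (u - 1) * (u + 1) = 0 by linear_combination h) with h | h
      · exact hu1 (by linarith)
      · exact hu2 (by linarith)
    have hxc : x ^ 2 + c = u / (u ^ 2 - 1) := by
      show (v / (u ^ 2 - 1)) ^ 2 + -1 / (u ^ 2 - 1) ^ 2 = u / (u ^ 2 - 1)
      field_simp
      linear_combination hE
    have h2 : (x ^ 2 + c) ^ 2 + c = 1 / (u ^ 2 - 1) := by
      rw [hxc]
      show (u / (u ^ 2 - 1)) ^ 2 + -1 / (u ^ 2 - 1) ^ 2 = 1 / (u ^ 2 - 1)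
      field_simp
      ring
    have h2ne : (x ^ 2 + c) ^ 2 + c ≠ 0 := by
      rw [h2]; exact one_div_ne_zero hd
    refine ⟨?_, h2ne, ?_, ?_⟩
    · rw [h2]
      show (1 / (u ^ 2 - 1)) ^ 2 + -1 / (u ^ 2 - 1) ^ 2 = 0
      field_simp
      ring
    · rw [h2, hxc]
      field_simp
    · rw [h2]
      show v / (u ^ 2 - 1) / (1 / (u ^ 2 - 1)) = v
      field_simp
  · intro x c hB hc u v
    exact key_aux x c (x ^ 2 + c) ((x ^ 2 + c) ^ 2 + c) rfl rfl hB hc
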